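/- Let U ⊆ ℂ^n be open with u_a ≠ u_b for every u ∈ U and all a ≠ b, and let A : U → M_n(ℂ) be differentiable. Define B_k(u) := −E_k(A(u) + I) for k = 1,…,n. Then the following two systems of equations are equivalent on U: (a) ∂_i A = [ω_i(u,A), A] for every i = 1,…,n; (b) the non-normalized Schlesinger equations with coefficients γ_i = ω_i(u,A) hold, namely ∂_i B_k = [B_i, B_k]/(u_i − u_k) + [ω_i(u,A), B_k] for all i ≠ k, and ∂_i B_i = −∑_{k≠i} [B_i, B_k]/(u_i − u_k) + [ω_i(u,A), B_i] for every i. -/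

import Mathlib

/-- `ω_j(u,A)`: the matrix whose `(a,b)` entry is `A_{ab}(δ_{aj} − δ_{bj})/(u_a − u_b)`
for `a ≠ b`, and whose diagonal entries are `0`. -/
noncomputable def omegaMat {n : ℕ} (u : Fin n → ℂ) (A : Matrix (Fin n) (Fin n) ℂ)
    (j : Fin n) : Matrix (Fin n) (Fin n) ℂ :=
  Matrix.of fun a b =>
    if a = b then 0
    else A a b * ((if a = j then (1 : ℂ) else 0) - (if b = j then (1 : ℂ) else 0)) / (u a - u b)

/-- The complex partial derivative `∂_j f` in the `j`-th coordinate. -/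
noncomputable def pd {n : ℕ} (j : Fin n) (f : (Fin n → ℂ) → ℂ) (u : Fin n → ℂ) : ℂ :=
  fderiv ℂ f u (Pi.single j 1)

/-- Entrywise partial derivative `∂_j A` of a matrix-valued map. -/
noncomputable def mpd {n : ℕ} (j : Fin n) (A : (Fin n → ℂ) → Matrix (Fin n) (Fin n) ℂ)
    (u : Fin n → ℂ) : Matrix (Fin n) (Fin n) ℂ :=
  Matrix.of fun a b => pd j (fun v => A v a b) u

variable {n : ℕ}

lemma EmulL (k : Fin n) (N : Matrix (Fin n) (Fin n) ℂ) (a b : Fin n) :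
    (Matrix.single k k (1:ℂ) * N) a b = if a = k then N k b else 0 := by
  by_cases h : a = k
  · subst h; simp
  · simp [h]

lemma EmulR (k : Fin n) (N : Matrix (Fin n) (Fin n) ℂ) (a b : Fin n) :
    (N * Matrix.single k k (1:ℂ)) a b = if b = k then N a k else 0 := by
  by_cases h : b = k
  · subst h; simp
  · simp [h]

lemma EME (i k : Fin n) (M : Matrix (Fin n) (Fin n) ℂ) (a b : Fin n) :
    (Matrix.single i i (1:ℂ) * M * Matrix.single k k (1:ℂ)) a b
      = if a = i ∧ b = k then M i k else 0 := by
  rw [EmulR, EmulL]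
  by_cases h1 : a = i <;> by_cases h2 : b = k <;> simp [h1, h2]

lemma sumE : (∑ k : Fin n, Matrix.single k k (1:ℂ)) = 1 := by
  ext a b
  simp only [Matrix.sum_apply, Matrix.single, Matrix.of_apply, Matrix.one_apply]
  by_cases h : a = b
  · subst h
    rw [Finset.sum_eq_single a]
    · simp
    · intro x _ hx
      have : ¬(x = a ∧ x = a) := fun h1 => hx h1.1
      simp only [this, if_false]
    · simp
  · rw [Finset.sum_eq_zero]
    · simp [h]
    · intro x _
      have : ¬(x = a ∧ x = b) := by rintro ⟨rfl, rfl⟩; exact h rfl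
      simp [this]

lemma lemC1 (u : Fin n → ℂ) (A : Matrix (Fin n) (Fin n) ℂ) (i k : Fin n) (hik : i ≠ k)
    (huik : u i ≠ u k) :
    omegaMat u A i * Matrix.single k k (1:ℂ)
      - Matrix.single k k (1:ℂ) * omegaMat u A i
    = (u i - u k)⁻¹ • (Matrix.single i i (1:ℂ) * (A + 1) * Matrix.single k k (1:ℂ)
        - Matrix.single k k (1:ℂ) * (A + 1) * Matrix.single i i (1:ℂ)) := by
  have hd : u i - u k ≠ 0 := sub_ne_zero.mpr huik
  have hd' : u k - u i ≠ 0 := sub_ne_zero.mpr (Ne.symm huik)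
  ext a b
  simp only [Matrix.sub_apply, Matrix.smul_apply, smul_eq_mul, EmulL, EmulR, EME,
    omegaMat, Matrix.of_apply, Matrix.add_apply, Matrix.one_apply]
  by_cases hb : b = k <;> by_cases ha : a = k <;> by_cases hai : a = i <;> by_cases hbi : b = i <;>
    simp_all <;> field_simp [hd, hd'] <;> ring

lemma lemC2 (u : Fin n → ℂ) (A : Matrix (Fin n) (Fin n) ℂ) (i : Fin n)
    (h : ∀ k, k ≠ i → u i ≠ u k) :
    omegaMat u A i * Matrix.single i i (1:ℂ)
      - Matrix.single i i (1:ℂ) * omegaMat u A i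
    = -∑ k ∈ Finset.univ.erase i, (u i - u k)⁻¹ •
        (Matrix.single i i (1:ℂ) * (A + 1) * Matrix.single k k (1:ℂ)
          - Matrix.single k k (1:ℂ) * (A + 1) * Matrix.single i i (1:ℂ)) := by
  ext a b
  simp only [Matrix.neg_apply, Matrix.sum_apply, Matrix.smul_apply, Matrix.sub_apply,
    smul_eq_mul, EmulL, EmulR, EME, omegaMat, Matrix.of_apply, Matrix.add_apply,
    Matrix.one_apply]
  by_cases ha : a = i <;> by_cases hb : b = i
  · rw [Finset.sum_eq_zero]
    · simp [ha, hb]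
    · intro k hk
      have h1 : ¬(i = k) := fun hc => (Finset.mem_erase.mp hk).1 hc.symm
      simp [ha, hb, h1]
  · -- a = i, b ≠ i
    subst ha
    have hd : u a - u b ≠ 0 := sub_ne_zero.mpr (h b hb)
    have hab : ¬(a = b) := fun hc => hb hc.symm
    rw [Finset.sum_eq_single b]
    · simp only [hab, hb, if_false, if_true, and_true, true_and, eq_self_iff_true]
      try field_simp
      try ring
    · intro k hk hkb
      have hbk : ¬(b = k) := fun hc => hkb hc.symm
      simp [hbk, hb]
    · intro hbmem
      exact absurd (Finset.mem_erase.mpr ⟨hb, Finset.mem_univ b⟩) hbmem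
  · -- a ≠ i, b = i
    subst hb
    have hd : u b - u a ≠ 0 := sub_ne_zero.mpr (h a ha)
    have hd2 : u a - u b ≠ 0 := fun hc => hd (by linear_combination -hc)
    rw [Finset.sum_eq_single a]
    · have h2 : ¬(b = a) := fun h3 => ha h3.symm
      simp only [ha, h2, if_false, if_true, and_true, true_and, eq_self_iff_true]
      try field_simp
      try ring
    · intro k hk hka
      have hbk : ¬(b = k) := fun hc => (Finset.mem_erase.mp hk).1 hc.symm
      have hak : ¬(a = k) := fun hc => hka hc.symm
      simp [hbk, hak]
    · intro hamem
      exact absurd (Finset.mem_erase.mpr ⟨ha, Finset.mem_univ a⟩) hamem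
  · -- a ≠ i, b ≠ i
    rw [Finset.sum_eq_zero]
    · simp [ha, hb]
    · intro k hk
      simp [ha, hb]

lemma lemD (A : (Fin n → ℂ) → Matrix (Fin n) (Fin n) ℂ)
    (B : Fin n → (Fin n → ℂ) → Matrix (Fin n) (Fin n) ℂ)
    (hB : ∀ k u, B k u = -(Matrix.single k k (1 : ℂ) * (A u + 1)))
    (i k : Fin n) (u : Fin n → ℂ) :
    mpd i (B k) u = -(Matrix.single k k (1:ℂ) * mpd i A u) := by
  ext a b
  simp only [mpd, Matrix.of_apply, Matrix.neg_apply, EmulL]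
  have hf : (fun v => B k v a b)
      = fun v => -(if a = k then A v k b + ((1:Matrix (Fin n) (Fin n) ℂ) k b) else 0) := by
    funext v
    rw [hB]
    simp only [Matrix.neg_apply, EmulL, Matrix.add_apply]
  rw [hf]
  by_cases h : a = k
  · simp only [h, if_true]
    unfold pd
    rw [show (fun v => -(A v k b + (1:Matrix (Fin n) (Fin n) ℂ) k b))
        = fun v => -((fun w => A w k b) v + (1:Matrix (Fin n) (Fin n) ℂ) k b) from rfl]
    rw [fderiv_fun_neg, fderiv_add_const]
    simp
  · simp only [h, if_false, neg_zero]
    simp [pd]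

lemma sumB (A : (Fin n → ℂ) → Matrix (Fin n) (Fin n) ℂ)
    (B : Fin n → (Fin n → ℂ) → Matrix (Fin n) (Fin n) ℂ)
    (hB : ∀ k u, B k u = -(Matrix.single k k (1 : ℂ) * (A u + 1)))
    (u : Fin n → ℂ) : ∑ k : Fin n, B k u = -(A u + 1) := by
  have : ∑ k : Fin n, B k u
      = -((∑ k : Fin n, Matrix.single k k (1:ℂ)) * (A u + 1)) := by
    rw [Finset.sum_mul, ← Finset.sum_neg_distrib]
    exact Finset.sum_congr rfl fun k _ => by rw [hB]
  rw [this, sumE, one_mul]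

/-- with `B_k(u) := −E_k(A(u)+I)`, the system
`∂_i A = [ω_i(u,A), A]` (for all `i`) is equivalent on `U` to the non-normalized
Schlesinger equations with coefficients `γ_i = ω_i(u,A)`. -/
theorem stmt5 {n : ℕ} (U : Set (Fin n → ℂ)) (hUopen : IsOpen U)
    (hdist : ∀ u ∈ U, ∀ a b : Fin n, a ≠ b → u a ≠ u b)
    (A : (Fin n → ℂ) → Matrix (Fin n) (Fin n) ℂ)
    (hdiff : ∀ a b : Fin n, DifferentiableOn ℂ (fun u => A u a b) U)
    (B : Fin n → (Fin n → ℂ) → Matrix (Fin n) (Fin n) ℂ)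
    (hB : ∀ k u, B k u = -(Matrix.single k k (1 : ℂ) * (A u + 1))) :
    (∀ u ∈ U, ∀ i : Fin n,
        mpd i A u = omegaMat u (A u) i * A u - A u * omegaMat u (A u) i)
    ↔
    (∀ u ∈ U,
      (∀ i k : Fin n, i ≠ k →
        mpd i (B k) u
          = (u i - u k)⁻¹ • (B i u * B k u - B k u * B i u)
            + (omegaMat u (A u) i * B k u - B k u * omegaMat u (A u) i))
      ∧ (∀ i : Fin n,
        mpd i (B i) u
          = -(∑ k ∈ Finset.univ.erase i,
                (u i - u k)⁻¹ • (B i u * B k u - B k u * B i u))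
            + (omegaMat u (A u) i * B i u - B i u * omegaMat u (A u) i))) := by
  constructor
  · intro ha u hu
    have hdu := hdist u hu
    constructor
    · intro i k hik
      have hC := lemC1 u (A u) i k hik (hdu i k hik)
      rw [lemD A B hB i k u, ha u hu i]
      simp only [hB]
      have e1 : -(Matrix.single k k (1:ℂ)
            * (omegaMat u (A u) i * A u - A u * omegaMat u (A u) i))
          = (omegaMat u (A u) i * Matrix.single k k (1:ℂ)
              - Matrix.single k k (1:ℂ) * omegaMat u (A u) i) * (A u + 1)
            + (Matrix.single k k (1:ℂ) * (A u + 1) * omegaMat u (A u) i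
              - omegaMat u (A u) i * (Matrix.single k k (1:ℂ) * (A u + 1))) := by
        noncomm_ring
      rw [e1, hC, smul_mul_assoc]
      have e2 : (Matrix.single i i (1:ℂ) * (A u + 1) * Matrix.single k k (1:ℂ)
            - Matrix.single k k (1:ℂ) * (A u + 1) * Matrix.single i i (1:ℂ))
            * (A u + 1)
          = -(Matrix.single i i (1:ℂ) * (A u + 1))
              * -(Matrix.single k k (1:ℂ) * (A u + 1))
            - -(Matrix.single k k (1:ℂ) * (A u + 1))
              * -(Matrix.single i i (1:ℂ) * (A u + 1)) := by
        noncomm_ring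
      rw [e2]
      congr 1
      noncomm_ring
    · intro i
      have hC2 := lemC2 u (A u) i (fun k hk => hdu i k (fun hc => hk hc.symm))
      rw [lemD A B hB i i u, ha u hu i]
      simp only [hB]
      have e1 : -(Matrix.single i i (1:ℂ)
            * (omegaMat u (A u) i * A u - A u * omegaMat u (A u) i))
          = (omegaMat u (A u) i * Matrix.single i i (1:ℂ)
              - Matrix.single i i (1:ℂ) * omegaMat u (A u) i) * (A u + 1)
            + (Matrix.single i i (1:ℂ) * (A u + 1) * omegaMat u (A u) i
              - omegaMat u (A u) i * (Matrix.single i i (1:ℂ) * (A u + 1))) := by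
        noncomm_ring
      rw [e1, hC2, neg_mul, Finset.sum_mul]
      have e4 : ∀ k ∈ Finset.univ.erase i,
          ((u i - u k)⁻¹ • (Matrix.single i i (1:ℂ) * (A u + 1)
              * Matrix.single k k (1:ℂ)
            - Matrix.single k k (1:ℂ) * (A u + 1)
              * Matrix.single i i (1:ℂ))) * (A u + 1)
          = (u i - u k)⁻¹ • (-(Matrix.single i i (1:ℂ) * (A u + 1))
              * -(Matrix.single k k (1:ℂ) * (A u + 1))
            - -(Matrix.single k k (1:ℂ) * (A u + 1))
              * -(Matrix.single i i (1:ℂ) * (A u + 1))) := by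
        intro k _
        rw [smul_mul_assoc]
        congr 1
        noncomm_ring
      rw [Finset.sum_congr rfl e4]
      congr 1
      noncomm_ring
  · intro hb u hu i
    obtain ⟨h1, h2⟩ := hb u hu
    have hsum : ∑ k : Fin n, mpd i (B k) u = -(mpd i A u) := by
      calc ∑ k : Fin n, mpd i (B k) u
          = ∑ k : Fin n, -(Matrix.single k k (1:ℂ) * mpd i A u) :=
            Finset.sum_congr rfl fun k _ => lemD A B hB i k u
        _ = -((∑ k : Fin n, Matrix.single k k (1:ℂ)) * mpd i A u) := by
            rw [Finset.sum_mul, Finset.sum_neg_distrib]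
        _ = -(mpd i A u) := by rw [sumE, one_mul]
    have hW : ∑ k : Fin n, mpd i (B k) u
        = ∑ k : Fin n, (omegaMat u (A u) i * B k u - B k u * omegaMat u (A u) i) := by
      rw [← Finset.add_sum_erase _ _ (Finset.mem_univ i), h2,
        Finset.sum_congr rfl (fun k hk => h1 i k (fun hc => (Finset.mem_erase.mp hk).1 hc.symm)),
        Finset.sum_add_distrib,
        ← Finset.add_sum_erase _
          (fun k => omegaMat u (A u) i * B k u - B k u * omegaMat u (A u) i)
          (Finset.mem_univ i)]
      abel
    have hfin : -(mpd i A u)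
        = omegaMat u (A u) i * -(A u + 1) - -(A u + 1) * omegaMat u (A u) i := by
      rw [← hsum, hW, Finset.sum_sub_distrib, ← Finset.mul_sum, ← Finset.sum_mul,
        sumB A B hB]
    calc mpd i A u = -(-(mpd i A u)) := (neg_neg _).symm
      _ = -(omegaMat u (A u) i * -(A u + 1) - -(A u + 1) * omegaMat u (A u) i) := by
          rw [hfin]
      _ = omegaMat u (A u) i * A u - A u * omegaMat u (A u) i := by noncomm_ring
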